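/- Let A, B be r₊×r₀ complex matrices and suppose there exists an r₀×r₀ unitary matrix W such that for every column index s, either the s-th column of AW is a real scalar multiple of the s-th column of BW, or both columns are zero; or the s-th column of BW is a real scalar multiple of the s-th column of AW. Then AB† − BA† = 0. -/
import Mathlib


open Matrix

/-- If there is a unitary W such that each column of AW is a real multiple of the
corresponding column of BW (or both columns vanish, or vice versa), then AB† − BA† = 0. -/
theorem stmt_4 {rp r0 : ℕ} (A B : Matrix (Fin rp) (Fin r0) ℂ)
    (W : Matrix (Fin r0) (Fin r0) ℂ) (hW : Wᴴ * W = 1 ∧ W * Wᴴ = 1)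
    (hcols : ∀ s : Fin r0,
      (∃ lam : ℝ, ∀ i, (A * W) i s = (lam : ℂ) * (B * W) i s) ∨
      (∃ lam : ℝ, ∀ i, (B * W) i s = (lam : ℂ) * (A * W) i s) ∨
      ((∀ i, (A * W) i s = 0) ∧ (∀ i, (B * W) i s = 0))) :
    A * Bᴴ - B * Aᴴ = 0 := by
  have key : (A * W) * (B * W)ᴴ = (B * W) * (A * W)ᴴ := by
    set P := A * W with hP
    set Q := B * W with hQ
    ext i j
    simp only [Matrix.mul_apply, Matrix.conjTranspose_apply]
    apply Finset.sum_congr rfl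
    intro s _
    rcases hcols s with ⟨lam, h⟩ | ⟨lam, h⟩ | ⟨h1, h2⟩
    · rw [h i, h j]
      simp [mul_comm, mul_left_comm, Complex.conj_ofReal]
      ring
    · rw [h i, h j]
      simp [Complex.conj_ofReal]
      ring
    · rw [h1 i, h2 i]
      simp
  have e1 : A * Bᴴ = (A * W) * (B * W)ᴴ := by
    rw [Matrix.conjTranspose_mul, Matrix.mul_assoc, ← Matrix.mul_assoc W, hW.2,
      Matrix.one_mul]
  have e2 : B * Aᴴ = (B * W) * (A * W)ᴴ := by
    rw [Matrix.conjTranspose_mul, Matrix.mul_assoc, ← Matrix.mul_assoc W, hW.2,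
      Matrix.one_mul]
  rw [e1, e2, key, sub_self]
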